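/- The Paige loop M*(q) = M(q)/Z(M(q)), the quotient of the determinant-1 Zorn matrix loop over F_q by its center, has order q^3(q^4 − 1)/gcd(q − 1, 2). -/

import Mathlib

open Matrix

/-- A Zorn vector matrix `[[a, α], [β, b]]` over a field `F`. -/
structure ZornMatrix (F : Type*) [Field F] where
  a : F
  α : Fin 3 → F
  β : Fin 3 → F
  b : F

namespace ZornMatrix

variable {F : Type*} [Field F]

/-- Zorn's vector matrix multiplication. -/
def mul (M N : ZornMatrix F) : ZornMatrix F :=
  ⟨M.a * N.a + M.α ⬝ᵥ N.β,
   M.a • N.α + N.b • M.α - M.β ⨯₃ N.β,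
   N.a • M.β + M.b • N.β + M.α ⨯₃ N.α,
   M.β ⬝ᵥ N.α + M.b * N.b⟩

/-- The determinant of a Zorn vector matrix. -/
def det (M : ZornMatrix F) : F := M.a * M.b - M.α ⬝ᵥ M.β

/-- The identity Zorn vector matrix. -/
def id : ZornMatrix F := ⟨1, 0, 0, 1⟩

end ZornMatrix

namespace ZornMatrix

variable {F : Type*} [Field F]

def neg' (M : ZornMatrix F) : ZornMatrix F := ⟨-M.a, -M.α, -M.β, -M.b⟩

lemma id_mul (x : ZornMatrix F) : mul id x = x := by
  cases x; simp [mul, id]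

lemma mul_id (x : ZornMatrix F) : mul x id = x := by
  cases x; simp [mul, id]

lemma neg'_mul (x y : ZornMatrix F) : mul (neg' x) y = neg' (mul x y) := by
  cases x; cases y
  simp only [mul, neg', mk.injEq]
  refine ⟨by simp [neg_dotProduct]; ring, ?_, ?_, by simp [neg_dotProduct]; ring⟩ <;>
    funext i <;> fin_cases i <;>
    simp [crossProduct, Matrix.vecHead, Matrix.vecTail, Function.comp] <;> ring

lemma mul_neg' (x y : ZornMatrix F) : mul x (neg' y) = neg' (mul x y) := by
  cases x; cases y
  simp only [mul, neg', mk.injEq]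
  refine ⟨by simp [dotProduct_neg]; ring, ?_, ?_, by simp [dotProduct_neg]; ring⟩ <;>
    funext i <;> fin_cases i <;>
    simp [crossProduct, Matrix.vecHead, Matrix.vecTail, Function.comp] <;> ring

lemma neg'_neg' (x : ZornMatrix F) : neg' (neg' x) = x := by
  cases x; simp [neg']

lemma det_neg' (x : ZornMatrix F) : (neg' x).det = x.det := by
  cases x; simp [det, neg', neg_dotProduct, dotProduct_neg]

end ZornMatrix

namespace ZornMatrix
variable {F : Type*} [Field F]

lemma central_eq (z : ZornMatrix F) (hdet : z.det = 1)
    (hcomm : ∀ x : ZornMatrix F, x.det = 1 → mul z x = mul x z) :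
    z = id ∨ z = neg' id := by
  classical
  have hβ : z.β = 0 := by
    funext i
    have h := hcomm ⟨1, Pi.single i 1, 0, 1⟩ (by simp [det])
    have h1 := congrArg ZornMatrix.a h
    simp [mul] at h1
    simpa using h1
  have hα : z.α = 0 := by
    funext i
    have h := hcomm ⟨1, 0, Pi.single i 1, 1⟩ (by simp [det])
    have h1 := congrArg ZornMatrix.a h
    simp [mul] at h1
    simpa using h1
  have hab : z.a = z.b := by
    have h := hcomm ⟨1, Pi.single 0 1, 0, 1⟩ (by simp [det])
    have h1 := congrArg (fun M => ZornMatrix.α M 0) h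
    simpa [mul, hβ, hα] using h1
  have ha : z.b * z.b = 1 := by
    have := hdet
    rw [det, hα, hab] at this
    simpa using this
  rcases mul_self_eq_one_iff.1 ha with h | h <;> [left; right] <;>
    (cases z; simp_all [id, neg']) 

end ZornMatrix

namespace ZornMatrix
variable {F : Type*} [Field F]

def prodEquiv : ZornMatrix F ≃ ((F × (Fin 3 → F)) × (F × (Fin 3 → F))) where
  toFun M := ((M.a, M.α), (M.b, M.β))
  invFun p := ⟨p.1.1, p.1.2, p.2.2, p.2.1⟩
  left_inv M := by cases M; rfl
  right_inv p := rfl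

noncomputable instance [Fintype F] : Fintype (ZornMatrix F) :=
  Fintype.ofEquiv _ prodEquiv.symm

/-- fibers of a surjective additive hom onto `F` have card `card dom / card F`;
here specialized. -/
lemma card_fiber [Fintype F] (f : (F × (Fin 3 → F)) →+ F) (hf : Function.Surjective f) (c : F) :
    Nat.card {v : F × (Fin 3 → F) // f v = c} = Fintype.card F ^ 3 := by
  classical
  obtain ⟨v0, hv0⟩ := hf c
  have e : {v : F × (Fin 3 → F) // f v = c} ≃ {v : F × (Fin 3 → F) // f v = 0} :=
    { toFun := fun v => ⟨v.1 - v0, by simp [map_sub, v.2, hv0]⟩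
      invFun := fun v => ⟨v.1 + v0, by simp [map_add, v.2, hv0]⟩
      left_inv := fun v => by simp
      right_inv := fun v => by simp }
  have e2 : {v : F × (Fin 3 → F) // f v = 0} ≃ f.ker :=
    Equiv.subtypeEquivRight fun v => by simp [AddMonoidHom.mem_ker]
  have hcard : Nat.card (F × (Fin 3 → F)) = Nat.card ((F × (Fin 3 → F)) ⧸ f.ker) * Nat.card f.ker :=
    AddSubgroup.card_eq_card_quotient_mul_card_addSubgroup f.ker
  have hquot : Nat.card ((F × (Fin 3 → F)) ⧸ f.ker) = Fintype.card F :=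
    (Nat.card_congr (QuotientAddGroup.quotientKerEquivOfSurjective f hf).toEquiv).trans
      Nat.card_eq_fintype_card
  have htot : Nat.card (F × (Fin 3 → F)) = Fintype.card F * Fintype.card F ^ 3 := by
    rw [Nat.card_eq_fintype_card]
    simp [Fintype.card_prod, Fintype.card_fun, pow_succ]
    try ring
  have hker : Nat.card f.ker = Fintype.card F ^ 3 := by
    have hpos : 0 < Fintype.card F := Fintype.card_pos
    rw [hquot, htot] at hcard
    exact (Nat.eq_of_mul_eq_mul_left hpos hcard.symm)
  rw [Nat.card_congr (e.trans e2), hker]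

lemma card_det_one [Fintype F] :
    Nat.card {M : ZornMatrix F // M.det = 1} =
      (Fintype.card F ^ 4 - 1) * Fintype.card F ^ 3 := by
  classical
  set q := Fintype.card F
  have e : {M : ZornMatrix F // M.det = 1} ≃
      Σ u : {u : F × (Fin 3 → F) // u ≠ 0},
        {v : F × (Fin 3 → F) // u.1.1 * v.1 - u.1.2 ⬝ᵥ v.2 = 1} :=
    { toFun := fun M => ⟨⟨(M.1.a, M.1.α), by
        intro h
        have h1 : M.1.a = 0 := congrArg Prod.fst h
        have h2 : M.1.α = 0 := congrArg Prod.snd h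
        have := M.2
        rw [det, h1, h2] at this
        simp at this⟩, ⟨(M.1.b, M.1.β), by
        have := M.2; rw [det] at this; exact this⟩⟩
      invFun := fun p => ⟨⟨p.1.1.1, p.1.1.2, p.2.1.2, p.2.1.1⟩, p.2.2⟩
      left_inv := fun M => by cases M with | mk M h => cases M; rfl
      right_inv := fun p => by rcases p with ⟨⟨⟨u1, u2⟩, hu⟩, ⟨⟨v1, v2⟩, hv⟩⟩; rfl }
  rw [Nat.card_congr e, Nat.card_eq_fintype_card, Fintype.card_sigma]
  have hfib : ∀ u : {u : F × (Fin 3 → F) // u ≠ 0},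
      Fintype.card {v : F × (Fin 3 → F) // u.1.1 * v.1 - u.1.2 ⬝ᵥ v.2 = 1} = q ^ 3 := by
    intro u
    rw [← Nat.card_eq_fintype_card]
    refine card_fiber ⟨⟨fun v => u.1.1 * v.1 - u.1.2 ⬝ᵥ v.2, by simp⟩,
      fun v w => by simp [dotProduct_add, mul_add]; ring⟩ ?_ 1
    intro c
    by_cases ha : u.1.1 = 0
    · have hα : u.1.2 ≠ 0 := by
        intro h; exact u.2 (Prod.ext ha h)
      obtain ⟨i, hi⟩ := Function.ne_iff.1 hα
      simp only [Pi.zero_apply] at hi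
      refine ⟨(0, Pi.single i (-(c / u.1.2 i))), ?_⟩
      simp only [AddMonoidHom.coe_mk, ZeroHom.coe_mk]
      rw [ha, dotProduct_single]
      field_simp
      simp
    · exact ⟨(c / u.1.1, 0), by simp [ha]; field_simp⟩
  calc (∑ u : {u : F × (Fin 3 → F) // u ≠ 0},
      Fintype.card {v : F × (Fin 3 → F) // u.1.1 * v.1 - u.1.2 ⬝ᵥ v.2 = 1})
      = ∑ _u : {u : F × (Fin 3 → F) // u ≠ 0}, q ^ 3 := by
        exact Finset.sum_congr rfl fun u _ => hfib u
    _ = Fintype.card {u : F × (Fin 3 → F) // u ≠ 0} * q ^ 3 := by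
        rw [Finset.sum_const, Finset.card_univ, smul_eq_mul]
    _ = (q ^ 4 - 1) * q ^ 3 := by
        congr 1
        have : Fintype.card {u : F × (Fin 3 → F) // ¬ u = 0} =
            Fintype.card (F × (Fin 3 → F)) - Fintype.card {u : F × (Fin 3 → F) // u = 0} :=
          Fintype.card_subtype_compl _
        rw [this, Fintype.card_subtype_eq]
        simp [Fintype.card_prod, Fintype.card_fun, q, pow_succ]
        ring_nf

end ZornMatrix

namespace ZornMatrix
variable {F : Type*} [Field F]

lemma ext'' {M N : ZornMatrix F} (h1 : M.a = N.a) (h2 : M.α = N.α) (h3 : M.β = N.β)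
    (h4 : M.b = N.b) : M = N := by
  cases M; cases N; simp_all

lemma char_two_iff [Fintype F] : (-1 : F) = 1 ↔ Fintype.card F % 2 = 0 := by
  rw [← FiniteField.even_card_iff_char_two]
  constructor
  · intro hc
    have h20 : (2:F) = 0 := by linear_combination (-1 : F) * hc
    have hdvd : ringChar F ∣ 2 := by
      haveI := ringChar.charP F
      exact (CharP.cast_eq_zero_iff F (ringChar F) 2).1 (by push_cast; exact h20)
    haveI := ringChar.charP F
    have hp : (ringChar F).Prime := CharP.char_is_prime F (ringChar F)
    exact (Nat.prime_dvd_prime_iff_eq hp Nat.prime_two).1 hdvd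
  · intro hc
    haveI := ringChar.charP F
    rw [hc] at this
    have h20 : ((2:ℕ):F) = 0 := CharP.cast_eq_zero F 2
    push_cast at h20
    linear_combination (-1 : F) * h20

end ZornMatrix


open ZornMatrix in
/-- Paige's simple Moufang loop `M*(q)`, the quotient of the determinant-one Zorn matrix
loop over `F_q` by its center, has order `q^3 (q^4 - 1) / gcd (q - 1) 2`. -/
theorem stmt10 {F : Type*} [Field F] [Fintype F] :
    letI q : ℕ := Fintype.card F
    letI Z : Set (ZornMatrix F) :=
      {z : ZornMatrix F | z.det = 1 ∧
        (∀ x : ZornMatrix F, x.det = 1 → mul z x = mul x z) ∧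
        (∀ x y : ZornMatrix F, x.det = 1 → y.det = 1 →
          mul z (mul x y) = mul (mul z x) y ∧
          mul x (mul z y) = mul (mul x z) y ∧
          mul (mul x y) z = mul x (mul y z))}
    Nat.card (Quot (fun x y : {M : ZornMatrix F // M.det = 1} => ∃ z ∈ Z, x.1 = mul z y.1)) =
      q ^ 3 * (q ^ 4 - 1) / Nat.gcd (q - 1) 2 := by
  classical
  set q := Fintype.card F with hq
  set Z : Set (ZornMatrix F) :=
    {z : ZornMatrix F | z.det = 1 ∧
      (∀ x : ZornMatrix F, x.det = 1 → mul z x = mul x z) ∧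
      (∀ x y : ZornMatrix F, x.det = 1 → y.det = 1 →
        mul z (mul x y) = mul (mul z x) y ∧
        mul x (mul z y) = mul (mul x z) y ∧
        mul (mul x y) z = mul x (mul y z))} with hZdef
  -- characterize the center
  have hZ : Z = {ZornMatrix.id, neg' ZornMatrix.id} := by
    ext z
    constructor
    · rintro ⟨h1, h2, _⟩
      simpa using central_eq z h1 h2
    · rintro (rfl | rfl)
      · exact ⟨by simp [ZornMatrix.det, ZornMatrix.id],
          fun x _ => by rw [id_mul, mul_id],
          fun x y _ _ => ⟨by rw [id_mul, id_mul], by rw [id_mul, mul_id],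
            by rw [mul_id, mul_id]⟩⟩
      · refine ⟨by rw [det_neg']; simp [ZornMatrix.det, ZornMatrix.id],
          fun x _ => by simp only [neg'_mul, mul_neg', id_mul, mul_id],
          fun x y _ _ => ⟨?_, ?_, ?_⟩⟩ <;>
          simp only [neg'_mul, mul_neg', id_mul, mul_id]
  set r := fun x y : {M : ZornMatrix F // M.det = 1} => ∃ z ∈ Z, x.1 = mul z y.1 with hr_def
  let negS : {M : ZornMatrix F // M.det = 1} → {M : ZornMatrix F // M.det = 1} :=
    fun y => ⟨neg' y.1, by rw [det_neg']; exact y.2⟩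
  have hr : ∀ x y, r x y ↔ (x = y ∨ x = negS y) := by
    intro x y
    constructor
    · rintro ⟨z, hz, hxz⟩
      rw [hZ] at hz
      rcases hz with rfl | rfl
      · exact Or.inl (Subtype.ext (by rw [hxz, id_mul]))
      · exact Or.inr (Subtype.ext (by rw [hxz, neg'_mul, id_mul]))
    · rintro (rfl | rfl)
      · exact ⟨ZornMatrix.id, by rw [hZ]; left; rfl, (id_mul _).symm⟩
      · exact ⟨neg' ZornMatrix.id, by rw [hZ]; right; rfl,
          by rw [neg'_mul, id_mul]⟩
  have hnegS : ∀ y, negS (negS y) = y := fun y => Subtype.ext (neg'_neg' _)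
  have hequiv : Equivalence r := by
    constructor
    · intro x; exact (hr x x).2 (Or.inl rfl)
    · intro x y h
      rcases (hr x y).1 h with rfl | rfl
      · exact (hr _ _).2 (Or.inl rfl)
      · exact (hr _ _).2 (Or.inr (hnegS y).symm)
    · intro x y w h1 h2
      rcases (hr x y).1 h1 with rfl | rfl <;> rcases (hr _ w).1 h2 with h3 | h3
      · exact (hr _ _).2 (Or.inl h3)
      · exact (hr _ _).2 (Or.inr h3)
      · exact (hr _ _).2 (Or.inr (by rw [h3]))
      · refine (hr _ _).2 (Or.inl ?_)
        rw [h3, hnegS]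
  set k := if (-1 : F) = 1 then 1 else 2 with hk
  have hkpos : 0 < k := by rw [hk]; split <;> norm_num
  have hfiber : ∀ t : Quot r, Nat.card {x // Quot.mk r x = t} = k := by
    intro t
    obtain ⟨y, rfl⟩ := Quot.exists_rep t
    have h1 : ∀ x, (Quot.mk r x = Quot.mk r y) ↔ x ∈ ({y, negS y} : Set _) := fun x => by
      rw [Quot.eq]
      exact (Equivalence.eqvGen_iff hequiv).trans ((hr x y).trans (by simp))
    rw [Nat.card_congr (Equiv.subtypeEquivRight h1), Nat.card_coe_set_eq]
    by_cases hc : (-1 : F) = 1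
    · have hneg : ∀ c : F, -c = c := fun c => by rw [← neg_one_mul, hc, one_mul]
      have hyy : negS y = y := by
        refine Subtype.ext (ext'' ?_ ?_ ?_ ?_) <;>
          simp only [neg', negS] <;>
          first
            | exact hneg _
            | (funext i; exact hneg _)
      rw [hyy, Set.pair_eq_singleton, Set.ncard_singleton, hk, if_pos hc]
    · have hne : y ≠ negS y := by
        intro h
        have h' : neg' y.1 = y.1 := (congrArg Subtype.val h).symm
        have h2 : (2:F) ≠ 0 := by
          intro h2
          exact hc (by linear_combination (-1 : F) * h2)
        have ha : y.1.a = 0 := by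
          have := congrArg ZornMatrix.a h'
          simp only [neg'] at this
          have h4 : (2:F) * y.1.a = 0 := by linear_combination -this
          rcases mul_eq_zero.1 h4 with h | h
          · exact absurd h h2
          · exact h
        have hα : y.1.α = 0 := by
          funext i
          have := congrArg (fun M => ZornMatrix.α M i) h'
          simp only [neg', Pi.neg_apply] at this
          have h4 : (2:F) * y.1.α i = 0 := by linear_combination -this
          rcases mul_eq_zero.1 h4 with h | h
          · exact absurd h h2
          · exact h
        have := y.2
        rw [ZornMatrix.det, ha, hα] at this
        simp at this
      rw [Set.ncard_pair hne, hk, if_neg hc]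
  have hsum : Nat.card {M : ZornMatrix F // M.det = 1} = Nat.card (Quot r) * k := by
    haveI : Finite (Quot r) := Finite.of_surjective (Quot.mk r) (fun t => Quot.exists_rep t)
    letI : Fintype (Quot r) := Fintype.ofFinite _
    rw [← Nat.card_congr (Equiv.sigmaFiberEquiv (Quot.mk r)), Nat.card_eq_fintype_card,
      Fintype.card_sigma]
    have hft : ∀ t : Quot r, Fintype.card {x // Quot.mk r x = t} = k := fun t => by
      rw [← Nat.card_eq_fintype_card]; exact hfiber t
    rw [Finset.sum_congr rfl (fun t _ => hft t), Finset.sum_const, Finset.card_univ,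
      smul_eq_mul, Nat.card_eq_fintype_card]
  have hN : Nat.card {M : ZornMatrix F // M.det = 1} = (q ^ 4 - 1) * q ^ 3 := card_det_one
  have hgcd : Nat.gcd (q - 1) 2 = k := by
    by_cases hc : (-1 : F) = 1
    · have heven : q % 2 = 0 := char_two_iff.1 hc
      have hq2 : 2 ≤ q := by rw [hq]; exact Fintype.one_lt_card
      rw [hk, if_pos hc]
      have hd : Nat.gcd (q - 1) 2 ∣ 2 := Nat.gcd_dvd_right _ _
      have hd1 : Nat.gcd (q - 1) 2 ∣ (q - 1) := Nat.gcd_dvd_left _ _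
      rcases (Nat.dvd_prime Nat.prime_two).1 hd with h | h
      · exact h
      · exfalso
        rw [h] at hd1
        obtain ⟨c, hcc⟩ := hd1
        omega
    · have hodd : q % 2 = 1 := by
        have h2 : ¬ (Fintype.card F % 2 = 0) := fun hh => hc (char_two_iff.2 hh)
        rw [hq]
        omega
      rw [hk, if_neg hc]
      refine Nat.dvd_antisymm (Nat.gcd_dvd_right _ _) (Nat.dvd_gcd ?_ dvd_rfl)
      omega
  have hQ : Nat.card (Quot r) = (q ^ 4 - 1) * q ^ 3 / k := by
    rw [← hN, hsum, Nat.mul_div_cancel _ hkpos]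
  rw [hQ, hgcd]
  congr 1
  ring
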